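/- Let n ≥ 1, let f : ℝⁿ → ℝ be a convex function, x ∈ ℝⁿ, t > 0 and ε ≥ 0. Then ∂_ε f(x) ⊆ D_t f(x) + closedBall(0, ε/t) (Minkowski sum with the closed ball of radius ε/t centered at the origin). -/

import Mathlib

open scoped RealInnerProductSpace Pointwise

/-- The ε-subdifferential of `g` at `x`. -/
def epsSubdiff {n : ℕ} (g : EuclideanSpace ℝ (Fin n) → ℝ) (ε : ℝ)
    (x : EuclideanSpace ℝ (Fin n)) : Set (EuclideanSpace ℝ (Fin n)) :=
  {ξ | ∀ y, g y ≥ g x + ⟪ξ, y - x⟫ - ε}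

/-- The subdifferential of `g` at `x`. -/
def subdiff {n : ℕ} (g : EuclideanSpace ℝ (Fin n) → ℝ)
    (x : EuclideanSpace ℝ (Fin n)) : Set (EuclideanSpace ℝ (Fin n)) :=
  {ξ | ∀ y, g y ≥ g x + ⟪ξ, y - x⟫}

/-- The t-spherical subdifferential of `g` at `x`. -/
def sphSubdiff {n : ℕ} (g : EuclideanSpace ℝ (Fin n) → ℝ) (t : ℝ)
    (x : EuclideanSpace ℝ (Fin n)) : Set (EuclideanSpace ℝ (Fin n)) :=
  convexHull ℝ {ξ | ∃ d : EuclideanSpace ℝ (Fin n), ‖d‖ = 1 ∧ ξ ∈ subdiff g (x + t • d)}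


lemma sum_extend_eq {ι : Type} [Fintype ι] {N : ℕ} (e : ι ↪ Fin N) {M : Type*} [AddCommMonoid M]
    (F : Fin N → M) (hF : ∀ j, (∀ i, e i ≠ j) → F j = 0) : ∑ j, F j = ∑ i, F (e i) := by
  have h1 : ∑ j ∈ Finset.univ.image e, F j = ∑ i, F (e i) :=
    Finset.sum_image (fun i _ i' _ h => e.injective h)
  rw [← h1]
  exact (Finset.sum_subset (Finset.subset_univ _) fun j _ hj =>
    hF j fun i hij => hj (Finset.mem_image.2 ⟨i, Finset.mem_univ _, hij⟩)).symm

lemma myIsCompact_convexHull {n : ℕ} {s : Set (EuclideanSpace ℝ (Fin n))}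
    (hs : IsCompact s) (hne : s.Nonempty) : IsCompact (convexHull ℝ s) := by
  obtain ⟨s₀, hs₀⟩ := hne
  set N := n + 1 with hN
  set φ : (Fin N → ℝ) × (Fin N → EuclideanSpace ℝ (Fin n)) → EuclideanSpace ℝ (Fin n) :=
    fun p => ∑ i, p.1 i • p.2 i with hφ
  have hcont : Continuous φ := by
    refine continuous_finset_sum _ fun i _ => ?_
    exact ((continuous_apply i).comp continuous_fst).smul ((continuous_apply i).comp continuous_snd)
  have hT : IsCompact ((stdSimplex ℝ (Fin N)) ×ˢ (Set.univ.pi fun _ : Fin N => s)) :=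
    (isCompact_stdSimplex _ _).prod (isCompact_univ_pi fun _ => hs)
  have himg : convexHull ℝ s = φ '' ((stdSimplex ℝ (Fin N)) ×ˢ (Set.univ.pi fun _ : Fin N => s)) := by
    apply Set.Subset.antisymm
    · intro x hx
      obtain ⟨ι, hfin, z, w, hzs, hai, hw0, hw1, hwz⟩ := eq_pos_convex_span_of_mem_convexHull hx
      have hcard : Fintype.card ι ≤ N := by
        have h1 := hai.card_le_finrank_succ
        have h2 : Module.finrank ℝ (vectorSpan ℝ (Set.range z)) ≤ n := by
          have := Submodule.finrank_le (vectorSpan ℝ (Set.range z))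
          simpa [finrank_euclideanSpace_fin] using this
        omega
      let e : ι ↪ Fin N := (Fintype.equivFin ι).toEmbedding.trans (Fin.castLEEmb hcard)
      set w' : Fin N → ℝ := Function.extend e w 0 with hw'
      set v' : Fin N → EuclideanSpace ℝ (Fin n) := Function.extend e z (fun _ => s₀) with hv'
      refine ⟨(w', v'), ⟨⟨?_, ?_⟩, ?_⟩, ?_⟩
      · intro j
        show 0 ≤ w' j
        by_cases h : ∃ i, e i = j
        · obtain ⟨i, rfl⟩ := h
          rw [hw', e.injective.extend_apply]
          exact (hw0 i).le
        · rw [hw', Function.extend_apply' _ _ _ h]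
          rfl
      · show ∑ j, w' j = 1
        rw [sum_extend_eq e w' (fun j hj => by
          rw [hw', Function.extend_apply' _ _ _ (by rintro ⟨i, rfl⟩; exact hj i rfl)]; rfl)]
        simp only [hw', e.injective.extend_apply]
        exact hw1
      · intro j _
        show v' j ∈ s
        by_cases h : ∃ i, e i = j
        · obtain ⟨i, rfl⟩ := h
          rw [hv', e.injective.extend_apply]
          exact hzs ⟨i, rfl⟩
        · rw [hv', Function.extend_apply' _ _ _ h]
          exact hs₀
      · show ∑ j, w' j • v' j = x
        rw [sum_extend_eq e (fun j => w' j • v' j) (fun j hj => by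
          have h0 : w' j = 0 := by
            rw [hw', Function.extend_apply' _ _ _ (by rintro ⟨i, rfl⟩; exact hj i rfl)]; rfl
          show w' j • v' j = 0
          rw [h0]; exact zero_smul _ _)]
        simp only [hw', hv', e.injective.extend_apply]
        exact hwz
    · rintro x ⟨⟨w, v⟩, ⟨⟨hw0, hw1⟩, hv⟩, rfl⟩
      exact (convex_convexHull ℝ s).sum_mem (fun i _ => hw0 i) hw1
        (fun i _ => subset_convexHull ℝ s (hv i (Set.mem_univ i)))
  rw [himg]
  exact hT.image hcont


lemma subdiff_nonempty {n : ℕ} {f : EuclideanSpace ℝ (Fin n) → ℝ}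
    (hf : ConvexOn ℝ Set.univ f) (hcont : Continuous f) (z : EuclideanSpace ℝ (Fin n)) :
    (subdiff f z).Nonempty := by
  set s : Set (EuclideanSpace ℝ (Fin n) × ℝ) := {p | f p.1 < p.2} with hsdef
  have hconv : Convex ℝ s := by
    rintro ⟨y₁, r₁⟩ h₁ ⟨y₂, r₂⟩ h₂ a b ha hb hab
    simp only [hsdef, Set.mem_setOf_eq] at h₁ h₂ ⊢
    have key : f (a • y₁ + b • y₂) ≤ a * f y₁ + b * f y₂ := by
      simpa [smul_eq_mul] using hf.2 (Set.mem_univ y₁) (Set.mem_univ y₂) ha hb hab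
    have : a * f y₁ + b * f y₂ < a * r₁ + b * r₂ := by
      rcases eq_or_lt_of_le ha with rfl | ha'
      · have hb1 : b = 1 := by linarith
        simpa [hb1] using h₂
      · have h1 : a * f y₁ < a * r₁ := (mul_lt_mul_iff_right₀ ha').2 h₁
        have h2 : b * f y₂ ≤ b * r₂ := mul_le_mul_of_nonneg_left h₂.le hb
        linarith
    exact lt_of_le_of_lt key this
  have hopen : IsOpen s := isOpen_lt (by fun_prop) continuous_snd
  have hzs : ((z, f z) : EuclideanSpace ℝ (Fin n) × ℝ) ∉ s := by simp [hsdef]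
  obtain ⟨ℓ, hℓ⟩ := geometric_hahn_banach_open_point hconv hopen hzs
  set c : ℝ := ℓ (0, 1) with hc'
  have hsplit : ∀ (y : EuclideanSpace ℝ (Fin n)) (r : ℝ), ℓ (y, r) = ℓ (y, 0) + r * c := by
    intro y r
    have h : ((y, r) : EuclideanSpace ℝ (Fin n) × ℝ) = (y, 0) + r • ((0 : EuclideanSpace ℝ (Fin n)), (1 : ℝ)) := by
      simp [Prod.ext_iff]
    rw [h, map_add, map_smul, smul_eq_mul]
  have hkey : ∀ (y : EuclideanSpace ℝ (Fin n)) (r : ℝ), f y < r →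
      ℓ (y, 0) + r * c < ℓ (z, 0) + f z * c := by
    intro y r h
    have := hℓ (y, r) h
    rwa [hsplit y r, hsplit z (f z)] at this
  have hc : c < 0 := by
    have := hkey z (f z + 1) (lt_add_one _)
    nlinarith
  have hc0 : c ≠ 0 := ne_of_lt hc
  have hle : ∀ y : EuclideanSpace ℝ (Fin n), ℓ (y, 0) + f y * c ≤ ℓ (z, 0) + f z * c := by
    intro y
    by_contra h
    push_neg at h
    have hδ : 0 < (ℓ (y, 0) + f y * c - (ℓ (z, 0) + f z * c)) / (-c) :=
      div_pos (by linarith) (by linarith)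
    have h2 := hkey y (f y + (ℓ (y, 0) + f y * c - (ℓ (z, 0) + f z * c)) / (-c))
      (lt_add_of_pos_right _ hδ)
    have h3 : (ℓ (y, 0) + f y * c - (ℓ (z, 0) + f z * c)) / (-c) * c
        = -(ℓ (y, 0) + f y * c - (ℓ (z, 0) + f z * c)) := by
      rw [div_mul_eq_mul_div, mul_div_assoc, div_neg, div_self hc0]
      ring
    nlinarith [h2, h3]
  set ℓ₁ : EuclideanSpace ℝ (Fin n) →L[ℝ] ℝ :=
    ℓ.comp (ContinuousLinearMap.inl ℝ (EuclideanSpace ℝ (Fin n)) ℝ) with hℓ₁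
  set wv : EuclideanSpace ℝ (Fin n) := (InnerProductSpace.toDual ℝ _).symm ℓ₁ with hwv
  have hw : ∀ v : EuclideanSpace ℝ (Fin n), ⟪wv, v⟫ = ℓ (v, 0) := by
    intro v
    rw [hwv, InnerProductSpace.toDual_symm_apply]
    rfl
  refine ⟨(-c⁻¹) • wv, fun y => ?_⟩
  have hA : ℓ (y, 0) - ℓ (z, 0) ≤ c * (f z - f y) := by nlinarith [hle y]
  have hinner : ⟪(-c⁻¹) • wv, y - z⟫ = (-c⁻¹) * (ℓ (y, 0) - ℓ (z, 0)) := by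
    rw [real_inner_smul_left]
    congr 1
    rw [hw (y - z)]
    have h : ((y - z, 0) : EuclideanSpace ℝ (Fin n) × ℝ) = (y, 0) - (z, 0) := by
      simp [Prod.ext_iff]
    rw [h, map_sub]
  rw [ge_iff_le, hinner]
  have h4 : (-c⁻¹) * (ℓ (y, 0) - ℓ (z, 0)) ≤ (-c⁻¹) * (c * (f z - f y)) := by
    apply mul_le_mul_of_nonneg_left hA
    have : 0 < -c⁻¹ := by
      rw [neg_pos]
      exact inv_neg''.2 hc
    linarith
  have h5 : (-c⁻¹) * (c * (f z - f y)) = f y - f z := by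
    field_simp
    ring
  linarith


lemma sphS_isCompact {n : ℕ} {f : EuclideanSpace ℝ (Fin n) → ℝ}
    (hcont : Continuous f) (x : EuclideanSpace ℝ (Fin n)) {t : ℝ} (ht : 0 < t) :
    IsCompact {ξ : EuclideanSpace ℝ (Fin n) |
      ∃ d : EuclideanSpace ℝ (Fin n), ‖d‖ = 1 ∧ ξ ∈ subdiff f (x + t • d)} := by
  set S := {ξ : EuclideanSpace ℝ (Fin n) |
      ∃ d : EuclideanSpace ℝ (Fin n), ‖d‖ = 1 ∧ ξ ∈ subdiff f (x + t • d)} with hS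
  obtain ⟨C, hC⟩ := (isCompact_closedBall x (t + 1)).exists_bound_of_continuousOn
    hcont.continuousOn
  have hC0 : 0 ≤ C := le_trans (norm_nonneg _) (hC x (by simp; linarith))
  have hbdd : S ⊆ Metric.closedBall 0 (2 * C) := by
    rintro ξ ⟨d, hd, hξ⟩
    rw [Metric.mem_closedBall, dist_zero_right]
    rcases eq_or_ne ξ 0 with rfl | hne
    · simp; linarith
    · have hnorm : 0 < ‖ξ‖ := norm_pos_iff.2 hne
      have hmem1 : x + t • d ∈ Metric.closedBall x (t + 1) := by
        rw [Metric.mem_closedBall, dist_eq_norm]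
        simp only [add_sub_cancel_left]
        rw [norm_smul, hd, Real.norm_eq_abs, abs_of_pos ht]
        linarith
      have hmem2 : x + t • d + ‖ξ‖⁻¹ • ξ ∈ Metric.closedBall x (t + 1) := by
        rw [Metric.mem_closedBall, dist_eq_norm]
        have : x + t • d + ‖ξ‖⁻¹ • ξ - x = t • d + ‖ξ‖⁻¹ • ξ := by abel
        rw [this]
        refine le_trans (norm_add_le _ _) ?_
        rw [norm_smul, norm_smul, hd, Real.norm_eq_abs, abs_of_pos ht, Real.norm_eq_abs,
          abs_of_pos (inv_pos.2 hnorm), inv_mul_cancel₀ hnorm.ne']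
        simp
      have hsub := hξ (x + t • d + ‖ξ‖⁻¹ • ξ)
      have e1 : x + t • d + ‖ξ‖⁻¹ • ξ - (x + t • d) = ‖ξ‖⁻¹ • ξ := by abel
      rw [e1] at hsub
      have e2 : ⟪ξ, ‖ξ‖⁻¹ • ξ⟫ = ‖ξ‖ := by
        rw [real_inner_smul_right, real_inner_self_eq_norm_mul_norm]
        field_simp
      rw [e2] at hsub
      have b1 := hC _ hmem1
      have b2 := hC _ hmem2
      rw [Real.norm_eq_abs] at b1 b2
      have := abs_le.1 b1
      have := abs_le.1 b2
      linarith [abs_le.1 b1, abs_le.1 b2]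
  have hclosed : IsClosed S := by
    apply IsSeqClosed.isClosed
    intro u p hu hup
    choose d hd1 hd2 using hu
    have hdS : ∀ k, d k ∈ Metric.sphere (0 : EuclideanSpace ℝ (Fin n)) 1 := by
      intro k; rw [mem_sphere_zero_iff_norm]; exact hd1 k
    obtain ⟨dl, hdl, φ, hφ, hdconv⟩ := (isCompact_sphere (0 : EuclideanSpace ℝ (Fin n)) 1).tendsto_subseq hdS
    refine ⟨dl, mem_sphere_zero_iff_norm.1 hdl, fun y => ?_⟩
    have hk : ∀ k, f (x + t • d (φ k)) + ⟪u (φ k), y - (x + t • d (φ k))⟫ ≤ f y :=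
      fun k => hd2 (φ k) y
    have t2 : Filter.Tendsto (fun k => u (φ k)) Filter.atTop (nhds p) :=
      hup.comp hφ.tendsto_atTop
    have t3 : Filter.Tendsto (fun k => x + t • d (φ k)) Filter.atTop (nhds (x + t • dl)) :=
      tendsto_const_nhds.add (hdconv.const_smul t)
    have t4 : Filter.Tendsto (fun k => f (x + t • d (φ k))) Filter.atTop (nhds (f (x + t • dl))) :=
      (hcont.tendsto _).comp t3
    have t5 : Filter.Tendsto (fun k => ⟪u (φ k), y - (x + t • d (φ k))⟫) Filter.atTop
        (nhds ⟪p, y - (x + t • dl)⟫) :=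
      t2.inner (tendsto_const_nhds.sub t3)
    exact le_of_tendsto (t4.add t5) (Filter.Eventually.of_forall hk)
  exact Metric.isCompact_of_isClosed_isBounded hclosed
    (Metric.isBounded_closedBall.subset hbdd)

theorem eps_subdiff_subset_sphSubdiff_add_ball {n : ℕ} (hn : 1 ≤ n)
    (f : EuclideanSpace ℝ (Fin n) → ℝ) (hf : ConvexOn ℝ Set.univ f)
    (x : EuclideanSpace ℝ (Fin n)) (t : ℝ) (ht : 0 < t) (ε : ℝ) (hε : 0 ≤ ε) :
    epsSubdiff f ε x ⊆
      sphSubdiff f t x + Metric.closedBall (0 : EuclideanSpace ℝ (Fin n)) (ε / t) := by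
  have hcont : Continuous f := continuousOn_univ.mp (hf.continuousOn isOpen_univ)
  intro ξ hξ
  set S := {ξ : EuclideanSpace ℝ (Fin n) |
      ∃ d : EuclideanSpace ℝ (Fin n), ‖d‖ = 1 ∧ ξ ∈ subdiff f (x + t • d)} with hS
  have hdef : sphSubdiff f t x = convexHull ℝ S := rfl
  have hScompact : IsCompact S := sphS_isCompact hcont x ht
  have hSne : S.Nonempty := by
    have hi : (0 : ℕ) < n := hn
    obtain ⟨η, hη⟩ := subdiff_nonempty hf hcont (x + t • EuclideanSpace.single (⟨0, hi⟩ : Fin n) (1:ℝ))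
    exact ⟨η, EuclideanSpace.single ⟨0, hi⟩ 1, by simp [EuclideanSpace.norm_single], hη⟩
  have hK : IsCompact (sphSubdiff f t x) := hdef ▸ myIsCompact_convexHull hScompact hSne
  have hKconv : Convex ℝ (sphSubdiff f t x) := hdef ▸ convex_convexHull ℝ S
  have hKne : (sphSubdiff f t x).Nonempty := hdef ▸ hSne.mono (subset_convexHull ℝ S)
  obtain ⟨p, hpK, hproj⟩ :=
    exists_norm_eq_iInf_of_complete_convex hKne hK.isClosed.isComplete hKconv ξ
  have hvar : ∀ w ∈ sphSubdiff f t x, ⟪ξ - p, w - p⟫ ≤ 0 :=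
    (norm_eq_iInf_iff_real_inner_le_zero hKconv hpK).1 hproj
  have hdist : ‖ξ - p‖ ≤ ε / t := by
    rcases eq_or_ne ξ p with heq | hne
    · rw [heq]; simp; positivity
    · have hnorm : 0 < ‖ξ - p‖ := by rwa [norm_pos_iff, sub_ne_zero]
      set u := ‖ξ - p‖⁻¹ • (ξ - p) with hu'
      have hu : ‖u‖ = 1 := by
        rw [hu', norm_smul, Real.norm_eq_abs, abs_of_pos (inv_pos.2 hnorm),
          inv_mul_cancel₀ hnorm.ne']
      obtain ⟨η, hη⟩ := subdiff_nonempty hf hcont (x + t • u)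
      have hηK : η ∈ sphSubdiff f t x := hdef ▸ subset_convexHull ℝ S ⟨u, hu, hη⟩
      have h1 := hξ (x + t • u)
      have h2 := hη x
      have e1 : (x + t • u) - x = t • u := add_sub_cancel_left x (t • u)
      have e2 : x - (x + t • u) = -(t • u) := by abel
      rw [ge_iff_le, e1] at h1
      rw [ge_iff_le, e2, inner_neg_right] at h2
      have hsm1 : ⟪ξ, t • u⟫ = t * ⟪ξ, u⟫ := real_inner_smul_right _ _ _
      have hsm2 : ⟪η, t • u⟫ = t * ⟪η, u⟫ := real_inner_smul_right _ _ _
      have hcomb : t * ⟪ξ, u⟫ - t * ⟪η, u⟫ ≤ ε := by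
        rw [hsm1] at h1; rw [hsm2] at h2; linarith
      have hiu : ⟪ξ - p, u⟫ = ‖ξ - p‖ := by
        rw [hu', real_inner_smul_right, real_inner_self_eq_norm_mul_norm]
        field_simp
      have hvp := hvar η hηK
      have hpu : 0 ≤ ⟪p - η, u⟫ := by
        rw [hu', real_inner_smul_right]
        apply mul_nonneg (inv_nonneg.2 hnorm.le)
        have : ⟪p - η, ξ - p⟫ = -⟪ξ - p, η - p⟫ := by
          rw [show p - η = -(η - p) by abel, inner_neg_left, real_inner_comm]
        rw [this]
        linarith
      have hsplit : ⟪ξ, u⟫ - ⟪η, u⟫ = ⟪ξ - p, u⟫ + ⟪p - η, u⟫ := by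
        rw [← inner_sub_left, ← inner_add_left]
        congr 1
        abel
      have hfinal : t * ‖ξ - p‖ ≤ ε := by
        have : t * (⟪ξ - p, u⟫ + ⟪p - η, u⟫) ≤ ε := by
          rw [← hsplit, mul_sub]; linarith [hcomb]
        rw [hiu] at this
        nlinarith [hpu]
      rw [le_div_iff₀ ht]
      linarith
  have hball : ξ - p ∈ Metric.closedBall (0 : EuclideanSpace ℝ (Fin n)) (ε / t) := by
    rw [Metric.mem_closedBall, dist_zero_right]; exact hdist
  have hmem := Set.add_mem_add hpK hball
  rwa [add_sub_cancel] at hmem
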